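/- For α, β > 0, set δ = α² - 3β² and γ = 3α² - β². Then the breather B(t,x) = 2√2 · ∂ₓ[arctan((β/α) · sin(α(x+δt)) / cosh(β(x+γt)))] is a classical solution of the focusing mKdV equation ∂ₜu + ∂ₓₓₓu + ∂ₓ(u³) = 0 on ℝ × ℝ. -/

import Mathlib

noncomputable def sn (α δ t x : ℝ) : ℝ := Real.sin (α * (x + δ * t))
noncomputable def cn (α δ t x : ℝ) : ℝ := Real.cos (α * (x + δ * t))
noncomputable def sh (β γ t x : ℝ) : ℝ := Real.sinh (β * (x + γ * t))
noncomputable def ch (β γ t x : ℝ) : ℝ := Real.cosh (β * (x + γ * t))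

noncomputable def Nf (α β δ γ t x : ℝ) : ℝ :=
  α * β * (α * cn α δ t x * ch β γ t x - β * sn α δ t x * sh β γ t x)
noncomputable def Df (α β δ γ t x : ℝ) : ℝ :=
  α ^ 2 * ch β γ t x ^ 2 + β ^ 2 * sn α δ t x ^ 2
noncomputable def N1f (α β δ γ t x : ℝ) : ℝ :=
  -(α * β * (α ^ 2 + β ^ 2) * sn α δ t x * ch β γ t x)
noncomputable def D1f (α β δ γ t x : ℝ) : ℝ :=
  2 * α * β * (α * ch β γ t x * sh β γ t x + β * sn α δ t x * cn α δ t x)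
noncomputable def N2f (α β δ γ t x : ℝ) : ℝ :=
  -(α * β * (α ^ 2 + β ^ 2) * (α * cn α δ t x * ch β γ t x + β * sn α δ t x * sh β γ t x))
noncomputable def D2f (α β δ γ t x : ℝ) : ℝ :=
  2 * α ^ 2 * β ^ 2 * (ch β γ t x ^ 2 + sh β γ t x ^ 2 + cn α δ t x ^ 2 - sn α δ t x ^ 2)
noncomputable def N3f (α β δ γ t x : ℝ) : ℝ :=
  -(α * β * (α ^ 2 + β ^ 2) * ((β ^ 2 - α ^ 2) * sn α δ t x * ch β γ t x + 2 * α * β * cn α δ t x * sh β γ t x))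
noncomputable def D3f (α β δ γ t x : ℝ) : ℝ :=
  8 * α ^ 2 * β ^ 2 * (β * ch β γ t x * sh β γ t x - α * sn α δ t x * cn α δ t x)
noncomputable def Ntf (α β δ γ t x : ℝ) : ℝ :=
  α * β * (-(α ^ 2 * δ + β ^ 2 * γ) * sn α δ t x * ch β γ t x + α * β * (γ - δ) * cn α δ t x * sh β γ t x)
noncomputable def Dtf (α β δ γ t x : ℝ) : ℝ :=
  2 * α * β * (α * γ * ch β γ t x * sh β γ t x + β * δ * sn α δ t x * cn α δ t x)
noncomputable def A2f (α β δ γ t x : ℝ) : ℝ :=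
  N1f α β δ γ t x * Df α β δ γ t x - Nf α β δ γ t x * D1f α β δ γ t x
noncomputable def A3f (α β δ γ t x : ℝ) : ℝ :=
  (N2f α β δ γ t x * Df α β δ γ t x - Nf α β δ γ t x * D2f α β δ γ t x) * Df α β δ γ t x -
    2 * (A2f α β δ γ t x * D1f α β δ γ t x)
noncomputable def A4f (α β δ γ t x : ℝ) : ℝ :=
  ((N3f α β δ γ t x * Df α β δ γ t x + N2f α β δ γ t x * D1f α β δ γ t x -
      (N1f α β δ γ t x * D2f α β δ γ t x + Nf α β δ γ t x * D3f α β δ γ t x)) * Df α β δ γ t x -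
    (N2f α β δ γ t x * Df α β δ γ t x - Nf α β δ γ t x * D2f α β δ γ t x) * D1f α β δ γ t x -
    2 * (A2f α β δ γ t x * D2f α β δ γ t x)) * Df α β δ γ t x -
    3 * (A3f α β δ γ t x * D1f α β δ γ t x)
noncomputable def g1f (α β δ γ t x : ℝ) : ℝ := Nf α β δ γ t x / Df α β δ γ t x
noncomputable def g2f (α β δ γ t x : ℝ) : ℝ := A2f α β δ γ t x / Df α β δ γ t x ^ 2
noncomputable def g3f (α β δ γ t x : ℝ) : ℝ := A3f α β δ γ t x / Df α β δ γ t x ^ 3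
noncomputable def g4f (α β δ γ t x : ℝ) : ℝ := A4f α β δ γ t x / Df α β δ γ t x ^ 4
noncomputable def g1tf (α β δ γ t x : ℝ) : ℝ :=
  (Ntf α β δ γ t x * Df α β δ γ t x - Nf α β δ γ t x * Dtf α β δ γ t x) / Df α β δ γ t x ^ 2

lemma bsin (α δ t x : ℝ) :
    HasDerivAt (fun y => Real.sin (α * (y + δ * t))) (α * Real.cos (α * (x + δ * t))) x := by
  have h : HasDerivAt (fun y : ℝ => α * (y + δ * t)) α x := by
    simpa using ((hasDerivAt_id x).add_const (δ * t)).const_mul α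
  have h2 := h.sin
  rw [show α * Real.cos (α * (x + δ * t)) = Real.cos (α * (x + δ * t)) * α by ring]
  exact h2

lemma bcos (α δ t x : ℝ) :
    HasDerivAt (fun y => Real.cos (α * (y + δ * t))) (-(α * Real.sin (α * (x + δ * t)))) x := by
  have h : HasDerivAt (fun y : ℝ => α * (y + δ * t)) α x := by
    simpa using ((hasDerivAt_id x).add_const (δ * t)).const_mul α
  have h2 := h.cos
  rw [show -(α * Real.sin (α * (x + δ * t))) = -Real.sin (α * (x + δ * t)) * α by ring]
  exact h2

lemma bsinh (β γ t x : ℝ) :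
    HasDerivAt (fun y => Real.sinh (β * (y + γ * t))) (β * Real.cosh (β * (x + γ * t))) x := by
  have h : HasDerivAt (fun y : ℝ => β * (y + γ * t)) β x := by
    simpa using ((hasDerivAt_id x).add_const (γ * t)).const_mul β
  have h2 := h.sinh
  rw [show β * Real.cosh (β * (x + γ * t)) = Real.cosh (β * (x + γ * t)) * β by ring]
  exact h2

lemma bcosh (β γ t x : ℝ) :
    HasDerivAt (fun y => Real.cosh (β * (y + γ * t))) (β * Real.sinh (β * (x + γ * t))) x := by
  have h : HasDerivAt (fun y : ℝ => β * (y + γ * t)) β x := by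
    simpa using ((hasDerivAt_id x).add_const (γ * t)).const_mul β
  have h2 := h.cosh
  rw [show β * Real.sinh (β * (x + γ * t)) = Real.sinh (β * (x + γ * t)) * β by ring]
  exact h2

lemma bsinT (α δ t x : ℝ) :
    HasDerivAt (fun t' => Real.sin (α * (x + δ * t'))) (α * δ * Real.cos (α * (x + δ * t))) t := by
  have h : HasDerivAt (fun t' : ℝ => α * (x + δ * t')) (α * δ) t := by
    simpa using (((hasDerivAt_id t).const_mul δ).const_add x).const_mul α
  have h2 := h.sin
  rw [show α * δ * Real.cos (α * (x + δ * t)) = Real.cos (α * (x + δ * t)) * (α * δ) by ring]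
  exact h2

lemma bcosT (α δ t x : ℝ) :
    HasDerivAt (fun t' => Real.cos (α * (x + δ * t'))) (-(α * δ * Real.sin (α * (x + δ * t)))) t := by
  have h : HasDerivAt (fun t' : ℝ => α * (x + δ * t')) (α * δ) t := by
    simpa using (((hasDerivAt_id t).const_mul δ).const_add x).const_mul α
  have h2 := h.cos
  rw [show -(α * δ * Real.sin (α * (x + δ * t))) = -Real.sin (α * (x + δ * t)) * (α * δ) by ring]
  exact h2

lemma bsinhT (β γ t x : ℝ) :
    HasDerivAt (fun t' => Real.sinh (β * (x + γ * t'))) (β * γ * Real.cosh (β * (x + γ * t))) t := by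
  have h : HasDerivAt (fun t' : ℝ => β * (x + γ * t')) (β * γ) t := by
    simpa using (((hasDerivAt_id t).const_mul γ).const_add x).const_mul β
  have h2 := h.sinh
  rw [show β * γ * Real.cosh (β * (x + γ * t)) = Real.cosh (β * (x + γ * t)) * (β * γ) by ring]
  exact h2

lemma bcoshT (β γ t x : ℝ) :
    HasDerivAt (fun t' => Real.cosh (β * (x + γ * t'))) (β * γ * Real.sinh (β * (x + γ * t))) t := by
  have h : HasDerivAt (fun t' : ℝ => β * (x + γ * t')) (β * γ) t := by
    simpa using (((hasDerivAt_id t).const_mul γ).const_add x).const_mul β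
  have h2 := h.cosh
  rw [show β * γ * Real.sinh (β * (x + γ * t)) = Real.sinh (β * (x + γ * t)) * (β * γ) by ring]
  exact h2

lemma Df_pos (α β δ γ t x : ℝ) (hα : α ≠ 0) : 0 < Df α β δ γ t x := by
  unfold Df ch sn
  have h1 : 1 ≤ Real.cosh (β * (x + γ * t)) := Real.one_le_cosh _
  have h2 : 0 < α ^ 2 := lt_of_le_of_ne (sq_nonneg α) (Ne.symm (pow_ne_zero 2 hα))
  have h3 : (1:ℝ) ≤ Real.cosh (β * (x + γ * t)) ^ 2 := by nlinarith
  nlinarith [sq_nonneg (β * Real.sin (α * (x + δ * t))),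
    mul_le_mul_of_nonneg_left h3 (le_of_lt h2)]

lemma Df_ne (α β δ γ t x : ℝ) (hα : α ≠ 0) : Df α β δ γ t x ≠ 0 :=
  (Df_pos α β δ γ t x hα).ne'

lemma hNf (α β δ γ t x : ℝ) :
    HasDerivAt (fun y => Nf α β δ γ t y) (N1f α β δ γ t x) x := by
  unfold Nf N1f sn cn sh ch
  have h := ((((bcos α δ t x).const_mul α).mul (bcosh β γ t x)).sub
    (((bsin α δ t x).const_mul β).mul (bsinh β γ t x))).const_mul (α * β)
  simp only [Pi.mul_def, Pi.sub_def, Pi.add_def, Pi.neg_def, Pi.pow_def, Pi.div_def] at h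
  refine h.congr_deriv ?_
  ring

lemma hDf (α β δ γ t x : ℝ) :
    HasDerivAt (fun y => Df α β δ γ t y) (D1f α β δ γ t x) x := by
  unfold Df D1f sn cn sh ch
  have h := (((bcosh β γ t x).pow 2).const_mul (α ^ 2)).add
    (((bsin α δ t x).pow 2).const_mul (β ^ 2))
  simp only [Pi.mul_def, Pi.sub_def, Pi.add_def, Pi.neg_def, Pi.pow_def, Pi.div_def] at h
  refine h.congr_deriv ?_
  push_cast
  ring

lemma hN1f (α β δ γ t x : ℝ) :
    HasDerivAt (fun y => N1f α β δ γ t y) (N2f α β δ γ t x) x := by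
  unfold N1f N2f sn cn sh ch
  have h := ((((bsin α δ t x).const_mul (α * β * (α ^ 2 + β ^ 2))).mul (bcosh β γ t x))).neg
  simp only [Pi.mul_def, Pi.sub_def, Pi.add_def, Pi.neg_def, Pi.pow_def, Pi.div_def] at h
  refine h.congr_deriv ?_
  ring

lemma hD1f (α β δ γ t x : ℝ) :
    HasDerivAt (fun y => D1f α β δ γ t y) (D2f α β δ γ t x) x := by
  unfold D1f D2f sn cn sh ch
  have h := ((((bcosh β γ t x).const_mul α).mul (bsinh β γ t x)).add
    (((bsin α δ t x).const_mul β).mul (bcos α δ t x))).const_mul (2 * α * β)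
  simp only [Pi.mul_def, Pi.sub_def, Pi.add_def, Pi.neg_def, Pi.pow_def, Pi.div_def] at h
  refine h.congr_deriv ?_
  ring

lemma hN2f (α β δ γ t x : ℝ) :
    HasDerivAt (fun y => N2f α β δ γ t y) (N3f α β δ γ t x) x := by
  unfold N2f N3f sn cn sh ch
  have h := ((((bcos α δ t x).const_mul α).mul (bcosh β γ t x)).add
    (((bsin α δ t x).const_mul β).mul (bsinh β γ t x))).const_mul (α * β * (α ^ 2 + β ^ 2))
  simp only [Pi.mul_def, Pi.sub_def, Pi.add_def, Pi.neg_def, Pi.pow_def, Pi.div_def] at h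
  refine h.neg.congr_deriv ?_
  ring

lemma hD2f (α β δ γ t x : ℝ) :
    HasDerivAt (fun y => D2f α β δ γ t y) (D3f α β δ γ t x) x := by
  unfold D2f D3f sn cn sh ch
  have h := (((((bcosh β γ t x).pow 2).add ((bsinh β γ t x).pow 2)).add
    ((bcos α δ t x).pow 2)).sub ((bsin α δ t x).pow 2)).const_mul (2 * α ^ 2 * β ^ 2)
  simp only [Pi.mul_def, Pi.sub_def, Pi.add_def, Pi.neg_def, Pi.pow_def, Pi.div_def] at h
  refine h.congr_deriv ?_
  push_cast
  ring

lemma hA2f (α β δ γ t x : ℝ) :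
    HasDerivAt (fun y => A2f α β δ γ t y)
      (N2f α β δ γ t x * Df α β δ γ t x - Nf α β δ γ t x * D2f α β δ γ t x) x := by
  unfold A2f
  have h := ((hN1f α β δ γ t x).mul (hDf α β δ γ t x)).sub
    ((hNf α β δ γ t x).mul (hD1f α β δ γ t x))
  simp only [Pi.mul_def, Pi.sub_def, Pi.add_def, Pi.neg_def, Pi.pow_def, Pi.div_def] at h
  refine h.congr_deriv ?_
  ring

lemma hA3f (α β δ γ t x : ℝ) :
    HasDerivAt (fun y => A3f α β δ γ t y)
      ((N3f α β δ γ t x * Df α β δ γ t x + N2f α β δ γ t x * D1f α β δ γ t x -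
        (N1f α β δ γ t x * D2f α β δ γ t x + Nf α β δ γ t x * D3f α β δ γ t x)) * Df α β δ γ t x -
        (N2f α β δ γ t x * Df α β δ γ t x - Nf α β δ γ t x * D2f α β δ γ t x) * D1f α β δ γ t x -
        2 * (A2f α β δ γ t x * D2f α β δ γ t x)) x := by
  unfold A3f
  have hP := ((hN2f α β δ γ t x).mul (hDf α β δ γ t x)).sub
    ((hNf α β δ γ t x).mul (hD2f α β δ γ t x))
  have h := (hP.mul (hDf α β δ γ t x)).sub
    (((hA2f α β δ γ t x).mul (hD1f α β δ γ t x)).const_mul 2)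
  simp only [Pi.mul_def, Pi.sub_def, Pi.add_def, Pi.neg_def, Pi.pow_def, Pi.div_def] at h
  refine h.congr_deriv ?_
  ring

lemma hg1f (α β δ γ t x : ℝ) (hα : α ≠ 0) :
    HasDerivAt (fun y => g1f α β δ γ t y) (g2f α β δ γ t x) x := by
  unfold g1f g2f A2f
  have h := (hNf α β δ γ t x).div (hDf α β δ γ t x) (Df_ne α β δ γ t x hα)
  simp only [Pi.mul_def, Pi.sub_def, Pi.add_def, Pi.neg_def, Pi.pow_def, Pi.div_def] at h
  exact h

lemma hg2f (α β δ γ t x : ℝ) (hα : α ≠ 0) :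
    HasDerivAt (fun y => g2f α β δ γ t y) (g3f α β δ γ t x) x := by
  have hD0 := Df_ne α β δ γ t x hα
  unfold g2f g3f A3f
  have h := (hA2f α β δ γ t x).div ((hDf α β δ γ t x).pow 2) (pow_ne_zero 2 hD0)
  simp only [Pi.mul_def, Pi.sub_def, Pi.add_def, Pi.neg_def, Pi.pow_def, Pi.div_def] at h
  refine h.congr_deriv ?_
  field_simp
  ring

lemma hg3f (α β δ γ t x : ℝ) (hα : α ≠ 0) :
    HasDerivAt (fun y => g3f α β δ γ t y) (g4f α β δ γ t x) x := by
  have hD0 := Df_ne α β δ γ t x hα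
  unfold g3f g4f A4f
  have h := (hA3f α β δ γ t x).div ((hDf α β δ γ t x).pow 3) (pow_ne_zero 3 hD0)
  simp only [Pi.mul_def, Pi.sub_def, Pi.add_def, Pi.neg_def, Pi.pow_def, Pi.div_def] at h
  refine h.congr_deriv ?_
  field_simp
  ring

lemma hNfT (α β δ γ t x : ℝ) :
    HasDerivAt (fun t' => Nf α β δ γ t' x) (Ntf α β δ γ t x) t := by
  unfold Nf Ntf sn cn sh ch
  have h := ((((bcosT α δ t x).const_mul α).mul (bcoshT β γ t x)).sub
    (((bsinT α δ t x).const_mul β).mul (bsinhT β γ t x))).const_mul (α * β)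
  simp only [Pi.mul_def, Pi.sub_def, Pi.add_def, Pi.neg_def, Pi.pow_def, Pi.div_def] at h
  refine h.congr_deriv ?_
  ring

lemma hDfT (α β δ γ t x : ℝ) :
    HasDerivAt (fun t' => Df α β δ γ t' x) (Dtf α β δ γ t x) t := by
  unfold Df Dtf sn cn sh ch
  have h := (((bcoshT β γ t x).pow 2).const_mul (α ^ 2)).add
    (((bsinT α δ t x).pow 2).const_mul (β ^ 2))
  simp only [Pi.mul_def, Pi.sub_def, Pi.add_def, Pi.neg_def, Pi.pow_def, Pi.div_def] at h
  refine h.congr_deriv ?_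
  push_cast
  ring

lemma hg1fT (α β δ γ t x : ℝ) (hα : α ≠ 0) :
    HasDerivAt (fun t' => g1f α β δ γ t' x) (g1tf α β δ γ t x) t := by
  unfold g1f g1tf
  have h := (hNfT α β δ γ t x).div (hDfT α β δ γ t x) (Df_ne α β δ γ t x hα)
  simp only [Pi.mul_def, Pi.sub_def, Pi.add_def, Pi.neg_def, Pi.pow_def, Pi.div_def] at h
  exact h

lemma barct (α β δ γ t x : ℝ) (hα : α ≠ 0) :
    HasDerivAt (fun y => Real.arctan ((β / α) * Real.sin (α * (y + δ * t)) /
      Real.cosh (β * (y + γ * t)))) (g1f α β δ γ t x) x := by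
  have hch : Real.cosh (β * (x + γ * t)) ≠ 0 := (Real.cosh_pos _).ne'
  have hq : (1 : ℝ) + ((β / α) * Real.sin (α * (x + δ * t)) / Real.cosh (β * (x + γ * t))) ^ 2 ≠ 0 := by
    positivity
  have hu := ((bsin α δ t x).const_mul (β / α)).div (bcosh β γ t x) hch
  have h := hu.arctan
  simp only [Pi.mul_def, Pi.sub_def, Pi.add_def, Pi.neg_def, Pi.pow_def, Pi.div_def] at h
  refine h.congr_deriv ?_
  unfold g1f Nf Df sn cn sh ch
  field_simp

set_option maxHeartbeats 2000000 in
lemma key' (a b s c S C : ℝ) (h1 : s ^ 2 + c ^ 2 = 1) (h2 : C ^ 2 - S ^ 2 = 1)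
    (hD : a ^ 2 * C ^ 2 + b ^ 2 * s ^ 2 ≠ 0) :
    ((a * b * (-(a ^ 2 * (a ^ 2 - 3 * b ^ 2) + b ^ 2 * (3 * a ^ 2 - b ^ 2)) * s * C + a * b * ((3 * a ^ 2 - b ^ 2) - (a ^ 2 - 3 * b ^ 2)) * c * S)) * (a ^ 2 * C ^ 2 + b ^ 2 * s ^ 2) - (a * b * (a * c * C - b * s * S)) * (2 * a * b * (a * (3 * a ^ 2 - b ^ 2) * C * S + b * (a ^ 2 - 3 * b ^ 2) * s * c))) / (a ^ 2 * C ^ 2 + b ^ 2 * s ^ 2) ^ 2 + ((((-(a * b * (a ^ 2 + b ^ 2) * ((b ^ 2 - a ^ 2) * s * C + 2 * a * b * c * S))) * (a ^ 2 * C ^ 2 + b ^ 2 * s ^ 2) + (-(a * b * (a ^ 2 + b ^ 2) * (a * c * C + b * s * S))) * (2 * a * b * (a * C * S + b * s * c)) - ((-(a * b * (a ^ 2 + b ^ 2) * s * C)) * (2 * a ^ 2 * b ^ 2 * (C ^ 2 + S ^ 2 + c ^ 2 - s ^ 2)) + (a * b * (a * c * C - b * s * S)) * (8 * a ^ 2 *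 b ^ 2 * (b * C * S - a * s * c)))) * (a ^ 2 * C ^ 2 + b ^ 2 * s ^ 2) - ((-(a * b * (a ^ 2 + b ^ 2) * (a * c * C + b * s * S))) * (a ^ 2 * C ^ 2 + b ^ 2 * s ^ 2) - (a * b * (a * c * C - b * s * S)) * (2 * a ^ 2 * b ^ 2 * (C ^ 2 + S ^ 2 + c ^ 2 - s ^ 2))) * (2 * a * b * (a * C * S + b * s * c)) - 2 * (((-(a * b * (a ^ 2 + b ^ 2) * s * C)) * (a ^ 2 * C ^ 2 + b ^ 2 * s ^ 2) - (a * b * (a * c * C - b * s * S)) * (2 * a * b * (a * C * S + b * s * c))) * (2 * a ^ 2 * b ^ 2 * (C ^ 2 + S ^ 2 + c ^ 2 - s ^ 2)))) * (a ^ 2 * C ^ 2 + b ^ 2 * s ^ 2) - 3 * ((((-(a * b * (a ^ 2 + b ^ 2) * (a * c * C + b * s * S))) * (a ^ 2 * C ^ 2 + b ^ 2 * s ^ 2) - (a * b * (a * c * C - b * s * S)) * (2 * a ^ 2 * b ^ 2 * (C ^ 2 + S ^ 2 + c ^ 2 - s ^ 2))) * (a ^ 2 * C ^ 2 + b ^ 2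 * s ^ 2) - 2 * (((-(a * b * (a ^ 2 + b ^ 2) * s * C)) * (a ^ 2 * C ^ 2 + b ^ 2 * s ^ 2) - (a * b * (a * c * C - b * s * S)) * (2 * a * b * (a * C * S + b * s * c))) * (2 * a * b * (a * C * S + b * s * c)))) * (2 * a * b * (a * C * S + b * s * c)))) / (a ^ 2 * C ^ 2 + b ^ 2 * s ^ 2) ^ 4 +
      24 * ((a * b * (a * c * C - b * s * S)) / (a ^ 2 * C ^ 2 + b ^ 2 * s ^ 2)) ^ 2 * (((-(a * b * (a ^ 2 + b ^ 2) * s * C)) * (a ^ 2 * C ^ 2 + b ^ 2 * s ^ 2) - (a * b * (a * c * C - b * s * S)) * (2 * a * b * (a * C * S + b * s * c))) / (a ^ 2 * C ^ 2 + b ^ 2 * s ^ 2) ^ 2) = 0 := by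
  have hz : ((a * b * (-(a ^ 2 * (a ^ 2 - 3 * b ^ 2) + b ^ 2 * (3 * a ^ 2 - b ^ 2)) * s * C + a * b * ((3 * a ^ 2 - b ^ 2) - (a ^ 2 - 3 * b ^ 2)) * c * S)) * (a ^ 2 * C ^ 2 + b ^ 2 * s ^ 2) - (a * b * (a * c * C - b * s * S)) * (2 * a * b * (a * (3 * a ^ 2 - b ^ 2) * C * S + b * (a ^ 2 - 3 * b ^ 2) * s * c))) * (a ^ 2 * C ^ 2 + b ^ 2 * s ^ 2) ^ 2 + ((((-(a * b * (a ^ 2 + b ^ 2) * ((b ^ 2 - a ^ 2) * s * C + 2 * a * b * c * S))) * (a ^ 2 * C ^ 2 + b ^ 2 * s ^ 2) + (-(a * b * (a ^ 2 + b ^ 2) * (a * c * C + b * s * S))) * (2 * a * b * (a * C * S + b * s * c)) - ((-(a * b * (a ^ 2 + b ^ 2) * s * C)) * (2 * a ^ 2 * b ^ 2 * (C ^ 2 + S ^ 2 + c ^ 2 - s ^ 2)) + (a * b * (a * c * C - b * s * S)) * (8 * a ^ 2 * b ^ 2 * (b * C * S - a * s * c)))) * (a ^ 2 * C ^ 2 +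 b ^ 2 * s ^ 2) - ((-(a * b * (a ^ 2 + b ^ 2) * (a * c * C + b * s * S))) * (a ^ 2 * C ^ 2 + b ^ 2 * s ^ 2) - (a * b * (a * c * C - b * s * S)) * (2 * a ^ 2 * b ^ 2 * (C ^ 2 + S ^ 2 + c ^ 2 - s ^ 2))) * (2 * a * b * (a * C * S + b * s * c)) - 2 * (((-(a * b * (a ^ 2 + b ^ 2) * s * C)) * (a ^ 2 * C ^ 2 + b ^ 2 * s ^ 2) - (a * b * (a * c * C - b * s * S)) * (2 * a * b * (a * C * S + b * s * c))) * (2 * a ^ 2 * b ^ 2 * (C ^ 2 + S ^ 2 + c ^ 2 - s ^ 2)))) * (a ^ 2 * C ^ 2 + b ^ 2 * s ^ 2) - 3 * ((((-(a * b * (a ^ 2 + b ^ 2) * (a * c * C + b * s * S))) * (a ^ 2 * C ^ 2 + b ^ 2 * s ^ 2) - (a * b * (a * c * C - b * s * S)) * (2 * a ^ 2 * b ^ 2 * (C ^ 2 + S ^ 2 + c ^ 2 - s ^ 2))) * (a ^ 2 * C ^ 2 + b ^ 2 * s ^ 2) - 2 * (((-(a * b * (a ^ 2 + b ^ 2) *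 s * C)) * (a ^ 2 * C ^ 2 + b ^ 2 * s ^ 2) - (a * b * (a * c * C - b * s * S)) * (2 * a * b * (a * C * S + b * s * c))) * (2 * a * b * (a * C * S + b * s * c)))) * (2 * a * b * (a * C * S + b * s * c)))) + 24 * (a * b * (a * c * C - b * s * S)) ^ 2 * ((-(a * b * (a ^ 2 + b ^ 2) * s * C)) * (a ^ 2 * C ^ 2 + b ^ 2 * s ^ 2) - (a * b * (a * c * C - b * s * S)) * (2 * a * b * (a * C * S + b * s * c))) = 0 := by
    linear_combination ((-24) * c * S * C ^ 4 * a ^ 8 * b ^ 4 + (-24) * s * C ^ 3 * a ^ 7 * b ^ 5 + 18 * s * C ^ 5 * a ^ 7 * b ^ 5 + (-6) * s * C ^ 5 * a ^ 9 * b ^ 3 + (-24) * s * c ^ 2 * C ^ 3 * a ^ 7 * b ^ 5 + (-24) * s ^ 3 * C * a ^ 5 * b ^ 7 + 12 * s ^ 3 * C ^ 3 * a ^ 5 * b ^ 7 + (-12) * s ^ 3 * C ^ 3 * a ^ 7 * b ^ 5 + (-24) * s ^ 3 * c ^ 2 * C * a ^ 5 * b ^ 7 + 24 * s ^ 4 *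 c * S * a ^ 4 * b ^ 8 + (-6) * s ^ 5 * C * a ^ 3 * b ^ 9 + (-6) * s ^ 5 * C * a ^ 5 * b ^ 7) * h1 + (24 * c * S * C ^ 4 * a ^ 8 * b ^ 4 + 24 * s * C ^ 3 * a ^ 7 * b ^ 5 + 6 * s * C ^ 5 * a ^ 7 * b ^ 5 + 6 * s * C ^ 5 * a ^ 9 * b ^ 3 + (-24) * s * S ^ 2 * C ^ 3 * a ^ 7 * b ^ 5 + 24 * s ^ 3 * C * a ^ 5 * b ^ 7 + 12 * s ^ 3 * C ^ 3 * a ^ 5 * b ^ 7 + (-12) * s ^ 3 * C ^ 3 * a ^ 7 * b ^ 5 + (-24) * s ^ 3 * S ^ 2 * C * a ^ 5 * b ^ 7 + (-24) * s ^ 4 * c * S * a ^ 4 * b ^ 8 + 6 * s ^ 5 * C * a ^ 3 * b ^ 9 + (-18) * s ^ 5 * C * a ^ 5 * b ^ 7) * h2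
  have he : ((a * b * (-(a ^ 2 * (a ^ 2 - 3 * b ^ 2) + b ^ 2 * (3 * a ^ 2 - b ^ 2)) * s * C + a * b * ((3 * a ^ 2 - b ^ 2) - (a ^ 2 - 3 * b ^ 2)) * c * S)) * (a ^ 2 * C ^ 2 + b ^ 2 * s ^ 2) - (a * b * (a * c * C - b * s * S)) * (2 * a * b * (a * (3 * a ^ 2 - b ^ 2) * C * S + b * (a ^ 2 - 3 * b ^ 2) * s * c))) / (a ^ 2 * C ^ 2 + b ^ 2 * s ^ 2) ^ 2 + ((((-(a * b * (a ^ 2 + b ^ 2) * ((b ^ 2 - a ^ 2) * s * C + 2 * a * b * c * S))) * (a ^ 2 * C ^ 2 + b ^ 2 * s ^ 2) + (-(a * b * (a ^ 2 + b ^ 2) * (a * c * C + b * s * S))) * (2 * a * b * (a * C * S + b * s * c)) - ((-(a * b * (a ^ 2 + b ^ 2) * s * C)) * (2 * a ^ 2 * b ^ 2 * (C ^ 2 + S ^ 2 + c ^ 2 - s ^ 2)) + (a * b * (a * c * C - b * s * S)) * (8 * a ^ 2 * b ^ 2 * (b * C * S - a * s * c)))) * (a ^ 2 * C ^ 2 +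 b ^ 2 * s ^ 2) - ((-(a * b * (a ^ 2 + b ^ 2) * (a * c * C + b * s * S))) * (a ^ 2 * C ^ 2 + b ^ 2 * s ^ 2) - (a * b * (a * c * C - b * s * S)) * (2 * a ^ 2 * b ^ 2 * (C ^ 2 + S ^ 2 + c ^ 2 - s ^ 2))) * (2 * a * b * (a * C * S + b * s * c)) - 2 * (((-(a * b * (a ^ 2 + b ^ 2) * s * C)) * (a ^ 2 * C ^ 2 + b ^ 2 * s ^ 2) - (a * b * (a * c * C - b * s * S)) * (2 * a * b * (a * C * S + b * s * c))) * (2 * a ^ 2 * b ^ 2 * (C ^ 2 + S ^ 2 + c ^ 2 - s ^ 2)))) * (a ^ 2 * C ^ 2 + b ^ 2 * s ^ 2) - 3 * ((((-(a * b * (a ^ 2 + b ^ 2) * (a * c * C + b * s * S))) * (a ^ 2 * C ^ 2 + b ^ 2 * s ^ 2) - (a * b * (a * c * C - b * s * S)) * (2 * a ^ 2 * b ^ 2 * (C ^ 2 + S ^ 2 + c ^ 2 - s ^ 2))) * (a ^ 2 * C ^ 2 + b ^ 2 * s ^ 2) - 2 * (((-(a * b * (a ^ 2 + b ^ 2) *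 s * C)) * (a ^ 2 * C ^ 2 + b ^ 2 * s ^ 2) - (a * b * (a * c * C - b * s * S)) * (2 * a * b * (a * C * S + b * s * c))) * (2 * a * b * (a * C * S + b * s * c)))) * (2 * a * b * (a * C * S + b * s * c)))) / (a ^ 2 * C ^ 2 + b ^ 2 * s ^ 2) ^ 4 +
      24 * ((a * b * (a * c * C - b * s * S)) / (a ^ 2 * C ^ 2 + b ^ 2 * s ^ 2)) ^ 2 * (((-(a * b * (a ^ 2 + b ^ 2) * s * C)) * (a ^ 2 * C ^ 2 + b ^ 2 * s ^ 2) - (a * b * (a * c * C - b * s * S)) * (2 * a * b * (a * C * S + b * s * c))) / (a ^ 2 * C ^ 2 + b ^ 2 * s ^ 2) ^ 2) = (((a * b * (-(a ^ 2 * (a ^ 2 - 3 * b ^ 2) + b ^ 2 * (3 * a ^ 2 - b ^ 2)) * s * C + a * b * ((3 * a ^ 2 - b ^ 2) - (a ^ 2 - 3 * b ^ 2)) * c * S)) * (a ^ 2 * C ^ 2 + b ^ 2 * s ^ 2) - (a * b * (a * c * C - b * s * S)) * (2 * a * b * (a * (3 * a ^ 2 - b ^ 2) * C * S + b * (a ^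 2 - 3 * b ^ 2) * s * c))) * (a ^ 2 * C ^ 2 + b ^ 2 * s ^ 2) ^ 2 + ((((-(a * b * (a ^ 2 + b ^ 2) * ((b ^ 2 - a ^ 2) * s * C + 2 * a * b * c * S))) * (a ^ 2 * C ^ 2 + b ^ 2 * s ^ 2) + (-(a * b * (a ^ 2 + b ^ 2) * (a * c * C + b * s * S))) * (2 * a * b * (a * C * S + b * s * c)) - ((-(a * b * (a ^ 2 + b ^ 2) * s * C)) * (2 * a ^ 2 * b ^ 2 * (C ^ 2 + S ^ 2 + c ^ 2 - s ^ 2)) + (a * b * (a * c * C - b * s * S)) * (8 * a ^ 2 * b ^ 2 * (b * C * S - a * s * c)))) * (a ^ 2 * C ^ 2 + b ^ 2 * s ^ 2) - ((-(a * b * (a ^ 2 + b ^ 2) * (a * c * C + b * s * S))) * (a ^ 2 * C ^ 2 + b ^ 2 * s ^ 2) - (a * b * (a * c * C - b * s * S)) * (2 * a ^ 2 * b ^ 2 * (C ^ 2 + S ^ 2 + c ^ 2 - s ^ 2))) * (2 * a * b * (a * C * S + b * s * c)) - 2 * (((-(a * b * (a ^ 2 + b ^ 2) * s * C)) * (a ^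 2 * C ^ 2 + b ^ 2 * s ^ 2) - (a * b * (a * c * C - b * s * S)) * (2 * a * b * (a * C * S + b * s * c))) * (2 * a ^ 2 * b ^ 2 * (C ^ 2 + S ^ 2 + c ^ 2 - s ^ 2)))) * (a ^ 2 * C ^ 2 + b ^ 2 * s ^ 2) - 3 * ((((-(a * b * (a ^ 2 + b ^ 2) * (a * c * C + b * s * S))) * (a ^ 2 * C ^ 2 + b ^ 2 * s ^ 2) - (a * b * (a * c * C - b * s * S)) * (2 * a ^ 2 * b ^ 2 * (C ^ 2 + S ^ 2 + c ^ 2 - s ^ 2))) * (a ^ 2 * C ^ 2 + b ^ 2 * s ^ 2) - 2 * (((-(a * b * (a ^ 2 + b ^ 2) * s * C)) * (a ^ 2 * C ^ 2 + b ^ 2 * s ^ 2) - (a * b * (a * c * C - b * s * S)) * (2 * a * b * (a * C * S + b * s * c))) * (2 * a * b * (a * C * S + b * s * c)))) * (2 * a * b * (a * C * S + b * s * c)))) + 24 * (a * b * (a * c * C - b * s * S)) ^ 2 * ((-(a * b * (a ^ 2 + b ^ 2) * s * C)) * (a ^ 2 * C ^ 2 + b ^ 2 * s ^ 2) - (a *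 b * (a * c * C - b * s * S)) * (2 * a * b * (a * C * S + b * s * c)))) / (a ^ 2 * C ^ 2 + b ^ 2 * s ^ 2) ^ 4 := by
    field_simp
  rw [he, hz, zero_div]

lemma key (α β δ γ t x : ℝ) (hα : 0 < α) (hβ : 0 < β)
    (hδ : δ = α ^ 2 - 3 * β ^ 2) (hγ : γ = 3 * α ^ 2 - β ^ 2) :
    g1tf α β δ γ t x + g4f α β δ γ t x +
      24 * g1f α β δ γ t x ^ 2 * g2f α β δ γ t x = 0 := by
  have hD := Df_ne α β δ γ t x hα.ne'
  unfold Df sn ch at hD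
  subst hδ hγ
  unfold g1tf g4f g1f g2f A4f A3f A2f Ntf Dtf Nf Df N1f D1f N2f D2f N3f D3f sn cn sh ch
  exact key' α β (Real.sin (α * (x + (α ^ 2 - 3 * β ^ 2) * t)))
    (Real.cos (α * (x + (α ^ 2 - 3 * β ^ 2) * t)))
    (Real.sinh (β * (x + (3 * α ^ 2 - β ^ 2) * t)))
    (Real.cosh (β * (x + (3 * α ^ 2 - β ^ 2) * t)))
    (Real.sin_sq_add_cos_sq _) (Real.cosh_sq_sub_sinh_sq _) hD

/-- The mKdV breather is a classical solution of the focusing mKdV equation. -/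
theorem mKdV_breather_solves (α β δ γ : ℝ) (hα : 0 < α) (hβ : 0 < β)
    (hδ : δ = α ^ 2 - 3 * β ^ 2) (hγ : γ = 3 * α ^ 2 - β ^ 2) :
    let B : ℝ → ℝ → ℝ := fun t x =>
      2 * Real.sqrt 2 *
        deriv (fun y => Real.arctan ((β / α) * Real.sin (α * (y + δ * t)) /
          Real.cosh (β * (y + γ * t)))) x
    ∀ t x : ℝ,
      deriv (fun t' => B t' x) t + deriv (deriv (deriv (B t))) x
        + deriv (fun y => (B t y) ^ 3) x = 0 := by
  intro B t x
  have hBfun : ∀ t', B t' = fun y => 2 * Real.sqrt 2 * g1f α β δ γ t' y := by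
    intro t'
    funext y
    show 2 * Real.sqrt 2 * deriv (fun y => Real.arctan ((β / α) * Real.sin (α * (y + δ * t')) /
        Real.cosh (β * (y + γ * t')))) y = _
    rw [(barct α β δ γ t' y hα.ne').deriv]
  have h1 : deriv (fun t' => B t' x) t = 2 * Real.sqrt 2 * g1tf α β δ γ t x := by
    have e : (fun t' => B t' x) = fun t' => 2 * Real.sqrt 2 * g1f α β δ γ t' x := by
      funext t'
      rw [hBfun t']
    rw [e]
    exact ((hg1fT α β δ γ t x hα.ne').const_mul (2 * Real.sqrt 2)).deriv
  have h3 : deriv (deriv (deriv (B t))) x = 2 * Real.sqrt 2 * g4f α β δ γ t x := by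
    have e1 : deriv (B t) = fun y => 2 * Real.sqrt 2 * g2f α β δ γ t y := by
      funext y
      rw [hBfun t]
      exact ((hg1f α β δ γ t y hα.ne').const_mul (2 * Real.sqrt 2)).deriv
    have e2 : deriv (deriv (B t)) = fun y => 2 * Real.sqrt 2 * g3f α β δ γ t y := by
      funext y
      rw [e1]
      exact ((hg2f α β δ γ t y hα.ne').const_mul (2 * Real.sqrt 2)).deriv
    rw [e2]
    exact ((hg3f α β δ γ t x hα.ne').const_mul (2 * Real.sqrt 2)).deriv
  have hBd : HasDerivAt (B t) (2 * Real.sqrt 2 * g2f α β δ γ t x) x := by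
    rw [hBfun t]
    exact (hg1f α β δ γ t x hα.ne').const_mul (2 * Real.sqrt 2)
  have hBx : B t x = 2 * Real.sqrt 2 * g1f α β δ γ t x := by rw [hBfun t]
  have h4 : deriv (fun y => (B t y) ^ 3) x =
      3 * (2 * Real.sqrt 2 * g1f α β δ γ t x) ^ 2 * (2 * Real.sqrt 2 * g2f α β δ γ t x) := by
    show deriv (B t ^ 3) x = _
    rw [(hBd.pow 3).deriv, hBx]
    norm_num
  rw [h1, h3, h4]
  have hs2 : Real.sqrt 2 ^ 2 = 2 := Real.sq_sqrt (by norm_num)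
  have hkey := key α β δ γ t x hα hβ hδ hγ
  linear_combination (2 * Real.sqrt 2) * hkey +
    (24 * Real.sqrt 2 * g1f α β δ γ t x ^ 2 * g2f α β δ γ t x) * hs2
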